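/- Let (J, ε, Δ) be a comonad on a category 𝒞 having equalizers and pullbacks, such that J preserves equalizers and pullbacks. Let f₀, g₀ : J Y → Z be morphisms, let e₀ : K₀ → J Y be their equalizer in 𝒞, and define the prolonged operators p^∞f₀ := J(f₀) ∘ Δ_Y and p^∞g₀ := J(g₀) ∘ Δ_Y : J Y → J Z. Let e : K → J Y be the equalizer of p^∞f₀ and p^∞g₀ in 𝒞, and let (K₀)^∞ → J Y be the prolongation of e₀, i.e. the pullback of Δ_Y : J Y → J(J Y) along J(e₀) : J K₀ → J(J Y), with its projection to J Y. Then K and (K₀)^∞ are isomorphic as subobjects of J Y: there is an isomorphism K ≅ (K₀)^∞ commuting with the monomorphisms into J Y. -/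

import Mathlib

open CategoryTheory CategoryTheory.Limits

/-- Let `(J, ε, Δ)` be a comonad on a category with equalizers and
pullbacks, preserved by `J`. For `f₀, g₀ : J Y ⟶ Z` with equalizer `e₀ : K₀ ⟶ J Y`, and
prolonged operators `p^∞f₀ := J(f₀) ∘ Δ_Y`, `p^∞g₀ := J(g₀) ∘ Δ_Y : J Y ⟶ J Z`, the
equalizer `K ⟶ J Y` of `p^∞f₀` and `p^∞g₀` coincides, as a subobject of `J Y`, with the
prolongation `(K₀)^∞` of `e₀`, i.e. the pullback of `Δ_Y` along `J(e₀)`. -/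
theorem statement14 {C : Type*} [Category C] [HasEqualizers C] [HasPullbacks C]
    (G : Comonad C)
    [PreservesLimitsOfShape WalkingParallelPair G.toFunctor]
    [PreservesLimitsOfShape WalkingCospan G.toFunctor]
    {Y Z : C} (f₀ g₀ : G.obj Y ⟶ Z) :
    ∃ φ : equalizer (G.δ.app Y ≫ G.map f₀) (G.δ.app Y ≫ G.map g₀)
        ≅ pullback (G.δ.app Y) (G.map (equalizer.ι f₀ g₀)),
      φ.hom ≫ pullback.fst (G.δ.app Y) (G.map (equalizer.ι f₀ g₀))
        = equalizer.ι (G.δ.app Y ≫ G.map f₀) (G.δ.app Y ≫ G.map g₀) := by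
  -- `G.map (equalizer.ι f₀ g₀)` is an equalizer of `G.map f₀`, `G.map g₀`
  have hl := isLimitForkMapOfIsLimit G.toFunctor (equalizer.condition f₀ g₀)
      (equalizerIsEqualizer f₀ g₀)
  haveI : Mono (G.map (equalizer.ι f₀ g₀)) :=
    G.toFunctor.map_mono (equalizer.ι f₀ g₀)
  -- the pullback fork
  have hcond : pullback.fst (G.δ.app Y) (G.map (equalizer.ι f₀ g₀))
      ≫ (G.δ.app Y ≫ G.map f₀)
      = pullback.fst (G.δ.app Y) (G.map (equalizer.ι f₀ g₀))
      ≫ (G.δ.app Y ≫ G.map g₀) := by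
    rw [← Category.assoc, ← Category.assoc, pullback.condition,
      Category.assoc, Category.assoc, ← G.toFunctor.map_comp,
      ← G.toFunctor.map_comp, equalizer.condition]
  -- lifts into the pullback
  have hw : ∀ s : Fork (G.δ.app Y ≫ G.map f₀) (G.δ.app Y ≫ G.map g₀),
      (s.ι ≫ G.δ.app Y) ≫ G.map f₀ = (s.ι ≫ G.δ.app Y) ≫ G.map g₀ := fun s => by
    simpa [Category.assoc] using s.condition
  set lft : ∀ s : Fork (G.δ.app Y ≫ G.map f₀) (G.δ.app Y ≫ G.map g₀),
      s.pt ⟶ pullback (G.δ.app Y) (G.map (equalizer.ι f₀ g₀)) := fun s =>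
    pullback.lift s.ι (Fork.IsLimit.lift' hl (s.ι ≫ G.δ.app Y) (hw s)).1
      (@id (s.ι ≫ G.δ.app Y = (Fork.IsLimit.lift' hl (s.ι ≫ G.δ.app Y) (hw s)).1
        ≫ G.map (equalizer.ι f₀ g₀))
        ((Fork.IsLimit.lift' hl (s.ι ≫ G.δ.app Y) (hw s)).2).symm) with hlft
  have hlim : IsLimit (Fork.ofι _ hcond) := by
    refine Fork.IsLimit.mk _ lft (fun s => ?_) (fun s m hm => ?_)
    · simp [hlft]
      exact pullback.lift_fst _ _ _
    · have hm' : m ≫ pullback.fst (G.δ.app Y) (G.map (equalizer.ι f₀ g₀)) = s.ι := hm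
      refine pullback.hom_ext ?_ ?_
      · rw [hlft, pullback.lift_fst, hm']
      · have h2 : (Fork.IsLimit.lift' hl (s.ι ≫ G.δ.app Y) (hw s)).1
            ≫ G.map (equalizer.ι f₀ g₀) = s.ι ≫ G.δ.app Y :=
          (Fork.IsLimit.lift' hl (s.ι ≫ G.δ.app Y) (hw s)).2
        rw [hlft, pullback.lift_snd, ← cancel_mono (G.map (equalizer.ι f₀ g₀)),
          Category.assoc, ← pullback.condition, h2, ← hm', Category.assoc]
  exact ⟨IsLimit.conePointUniqueUpToIso (limit.isLimit _) hlim,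
    IsLimit.conePointUniqueUpToIso_hom_comp (limit.isLimit _) hlim .zero⟩
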